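/- arXiv:2406.04112 — 4 statements merged into one kernel-verified Lean document; each statement's English description precedes it below -/
import Mathlib

section
/- Suppose η·(λ + ∏_{k≠l} ε_k²) ≤ 1 for every l ∈ {1,…,L}. Then for every l ∈ {1,…,L} and every t ≥ 0: 0 ≤ ρ_l(t+1) ≤ ρ_l(t) ≤ ε_l. -/
open Matrix BigOperators Filter

noncomputable section

/-- Auxiliary: product of `k` consecutive matrices ending (on the right) at index `i`. -/
def chainAux {n : Type*} [Fintype n] [DecidableEq n]
    (W : ℕ → Matrix n n ℝ) (i : ℕ) : ℕ → Matrix n n ℝ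
  | 0 => 1
  | (k+1) => W (i + k) * chainAux W i k

/-- `chain W i j = W j * W (j-1) * ⋯ * W i`; equals `1` when `j < i` (empty product). -/
def chain {n : Type*} [Fintype n] [DecidableEq n]
    (W : ℕ → Matrix n n ℝ) (i j : ℕ) : Matrix n n ℝ :=
  chainAux W i (j + 1 - i)

/-- `blockDiag r m A B` is the `(2r+m)×(2r+m)` block-diagonal matrix `diag(A, B)`
with top-left block `A` (of size `2r×2r`) and bottom-right block `B` (of size `m×m`). -/
def blockDiag (r m : ℕ) (A : Matrix (Fin (2*r)) (Fin (2*r)) ℝ)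
    (B : Matrix (Fin m) (Fin m) ℝ) : Matrix (Fin (2*r + m)) (Fin (2*r + m)) ℝ :=
  Matrix.reindex finSumFinEquiv finSumFinEquiv (Matrix.fromBlocks A 0 0 B)

/-- The `d×2r` matrix formed by the first `2r` columns of a `(2r+m)×(2r+m)` matrix. -/
def cols1 (r m : ℕ) (U : Matrix (Fin (2*r + m)) (Fin (2*r + m)) ℝ) :
    Matrix (Fin (2*r + m)) (Fin (2*r)) ℝ :=
  fun i j => U i (Fin.castAdd m j)

/-- The `d×m` matrix formed by the last `m` columns of a `(2r+m)×(2r+m)` matrix. -/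
def cols2 (r m : ℕ) (U : Matrix (Fin (2*r + m)) (Fin (2*r + m)) ℝ) :
    Matrix (Fin (2*r + m)) (Fin m) ℝ :=
  fun i j => U i (Fin.natAdd (2*r) j)

/-- Squared Frobenius norm: `‖A‖_F² = trace(AᵀA)`. -/
def frobSq {p q : Type*} [Fintype p] [Fintype q] (A : Matrix p q ℝ) : ℝ :=
  Matrix.trace (Aᵀ * A)

/-- Frobenius norm: `‖A‖_F = √(trace(AᵀA))`. -/
def frobNorm {p q : Type*} [Fintype p] [Fintype q] (A : Matrix p q ℝ) : ℝ :=
  Real.sqrt (Matrix.trace (Aᵀ * A))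

/-- if `η·(λ + ∏_{k≠l} ε_k²) ≤ 1` for every layer `l`, then each
sequence `ρ_l(t)` is nonnegative, nonincreasing, and bounded above by `ε_l`. -/
theorem statement13
    (L : ℕ) (hL : 1 ≤ L)
    (ε : ℕ → ℝ) (hε : ∀ l, 1 ≤ l → l ≤ L → 0 < ε l)
    (η lam : ℝ) (hη : 0 < η) (hlam : 0 ≤ lam)
    (ρ : ℕ → ℕ → ℝ)
    (hρ0 : ∀ l, ρ 0 l = ε l)
    (hρ : ∀ t l, ρ (t+1) l
      = ρ t l * (1 - η * lam - η * ∏ k ∈ (Finset.Icc 1 L).erase l, (ρ t k)^2))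
    (hstep : ∀ l, 1 ≤ l → l ≤ L →
      η * (lam + ∏ k ∈ (Finset.Icc 1 L).erase l, (ε k)^2) ≤ 1) :
    ∀ l, 1 ≤ l → l ≤ L → ∀ t : ℕ,
      0 ≤ ρ (t+1) l ∧ ρ (t+1) l ≤ ρ t l ∧ ρ t l ≤ ε l := by
  -- Strengthened invariant: 0 ≤ ρ t l ≤ ε l for all l in range.
  have key : ∀ t : ℕ, ∀ l, 1 ≤ l → l ≤ L → 0 ≤ ρ t l ∧ ρ t l ≤ ε l := by
    intro t
    induction t with
    | zero =>
      intro l h1 h2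
      rw [hρ0]
      exact ⟨(hε l h1 h2).le, le_refl _⟩
    | succ t ih =>
      -- first establish the factor bounds for each l
      have hfac : ∀ l, 1 ≤ l → l ≤ L →
          0 ≤ 1 - η * lam - η * ∏ k ∈ (Finset.Icc 1 L).erase l, (ρ t k)^2 ∧
          1 - η * lam - η * ∏ k ∈ (Finset.Icc 1 L).erase l, (ρ t k)^2 ≤ 1 := by
        intro l h1 h2
        have hprod_nonneg : 0 ≤ ∏ k ∈ (Finset.Icc 1 L).erase l, (ρ t k)^2 :=
          Finset.prod_nonneg (fun k _ => sq_nonneg _)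
        have hprod_le : ∏ k ∈ (Finset.Icc 1 L).erase l, (ρ t k)^2
            ≤ ∏ k ∈ (Finset.Icc 1 L).erase l, (ε k)^2 := by
          apply Finset.prod_le_prod (fun k _ => sq_nonneg _)
          intro k hk
          have hk' := Finset.mem_of_mem_erase hk
          rw [Finset.mem_Icc] at hk'
          obtain ⟨hk0, hkE⟩ := ih k hk'.1 hk'.2
          exact pow_le_pow_left₀ hk0 hkE 2
        constructor
        · have h3 : η * lam + η * ∏ k ∈ (Finset.Icc 1 L).erase l, (ρ t k)^2
              ≤ η * (lam + ∏ k ∈ (Finset.Icc 1 L).erase l, (ε k)^2) := by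
            rw [mul_add]
            gcongr
          have := le_trans h3 (hstep l h1 h2)
          linarith
        · nlinarith [mul_nonneg hη.le hlam, mul_nonneg hη.le hprod_nonneg]
      intro l h1 h2
      obtain ⟨h0, hE⟩ := ih l h1 h2
      obtain ⟨hf0, hf1⟩ := hfac l h1 h2
      rw [hρ]
      refine ⟨mul_nonneg h0 hf0, ?_⟩
      calc ρ t l * (1 - η * lam - η * ∏ k ∈ (Finset.Icc 1 L).erase l, (ρ t k)^2)
          ≤ ρ t l * 1 := by gcongr
        _ = ρ t l := mul_one _
        _ ≤ ε l := hE
  intro l h1 h2 t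
  obtain ⟨h0, hE⟩ := key t l h1 h2
  obtain ⟨h0', _⟩ := key (t+1) l h1 h2
  refine ⟨h0', ?_, hE⟩
  rw [hρ]
  have hprod_nonneg : 0 ≤ ∏ k ∈ (Finset.Icc 1 L).erase l, (ρ t k)^2 :=
    Finset.prod_nonneg (fun k _ => sq_nonneg _)
  nlinarith [mul_nonneg hη.le hlam, mul_nonneg hη.le hprod_nonneg]
end
end

section
/- Suppose η·(λ + ∏_{k≠l} ε_k²) ≤ 1 for every l ∈ {1,…,L}, and suppose λ > 0. Then for every l ∈ {1,…,L} and every t ≥ 0: 0 ≤ ρ_l(t) ≤ ε_l·(1 − ηλ)^t; in particular, since 0 ≤ 1 − ηλ < 1, ρ_l(t) → 0 as t → ∞. -/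
open Matrix BigOperators Filter

noncomputable section

/-- with weight decay `λ > 0` and step size satisfying
`η·(λ + ∏_{k≠l} ε_k²) ≤ 1` for every layer, `0 ≤ ρ_l(t) ≤ ε_l·(1−ηλ)ᵗ`; in
particular `0 ≤ 1 − ηλ < 1` and `ρ_l(t) → 0` as `t → ∞`. -/
theorem statement14
    (L : ℕ) (hL : 1 ≤ L)
    (ε : ℕ → ℝ) (hε : ∀ l, 1 ≤ l → l ≤ L → 0 < ε l)
    (η lam : ℝ) (hη : 0 < η) (hlam : 0 ≤ lam)
    (ρ : ℕ → ℕ → ℝ)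
    (hρ0 : ∀ l, ρ 0 l = ε l)
    (hρ : ∀ t l, ρ (t+1) l
      = ρ t l * (1 - η * lam - η * ∏ k ∈ (Finset.Icc 1 L).erase l, (ρ t k)^2))
    (hstep : ∀ l, 1 ≤ l → l ≤ L →
      η * (lam + ∏ k ∈ (Finset.Icc 1 L).erase l, (ε k)^2) ≤ 1)
    (hlam_pos : 0 < lam) :
    (∀ l, 1 ≤ l → l ≤ L → ∀ t : ℕ, 0 ≤ ρ t l ∧ ρ t l ≤ ε l * (1 - η * lam)^t) ∧
    (0 ≤ 1 - η * lam ∧ 1 - η * lam < 1) ∧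
    (∀ l, 1 ≤ l → l ≤ L →
      Filter.Tendsto (fun t : ℕ => ρ t l) Filter.atTop (nhds 0)) := by
  have hr0 : 0 ≤ 1 - η * lam := by
    have h1 := hstep 1 le_rfl hL
    have hP : 0 ≤ ∏ k ∈ (Finset.Icc 1 L).erase 1, (ε k)^2 :=
      Finset.prod_nonneg fun k _ => sq_nonneg _
    nlinarith
  have hr1 : 1 - η * lam < 1 := by nlinarith
  have main : ∀ t, ∀ l, 1 ≤ l → l ≤ L →
      0 ≤ ρ t l ∧ ρ t l ≤ ε l * (1 - η * lam)^t := by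
    intro t
    induction t with
    | zero =>
      intro l h1 h2
      rw [hρ0]
      exact ⟨(hε l h1 h2).le, by simp⟩
    | succ t ih =>
      intro l h1 h2
      obtain ⟨hpos, hub⟩ := ih l h1 h2
      have hrt : (1 - η * lam) ^ t ≤ 1 := pow_le_one₀ hr0 hr1.le
      have hrtnn : 0 ≤ (1 - η * lam) ^ t := pow_nonneg hr0 t
      have hPle : ∏ k ∈ (Finset.Icc 1 L).erase l, (ρ t k)^2
          ≤ ∏ k ∈ (Finset.Icc 1 L).erase l, (ε k)^2 := by
        apply Finset.prod_le_prod
        · intro k _; exact sq_nonneg _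
        · intro k hk
          obtain ⟨hk1, hk2⟩ := Finset.mem_Icc.mp (Finset.mem_of_mem_erase hk)
          obtain ⟨hkp, hkub⟩ := ih k hk1 hk2
          have hεk := (hε k hk1 hk2).le
          have : ρ t k ≤ ε k := hkub.trans (by nlinarith)
          exact pow_le_pow_left₀ hkp this 2
      have hPnn : 0 ≤ ∏ k ∈ (Finset.Icc 1 L).erase l, (ρ t k)^2 :=
        Finset.prod_nonneg fun k _ => sq_nonneg _
      have hfacnn : 0 ≤ 1 - η * lam - η * ∏ k ∈ (Finset.Icc 1 L).erase l, (ρ t k)^2 := by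
        have := hstep l h1 h2
        nlinarith
      have hfacle : 1 - η * lam - η * ∏ k ∈ (Finset.Icc 1 L).erase l, (ρ t k)^2
          ≤ 1 - η * lam := by nlinarith
      rw [hρ]
      constructor
      · exact mul_nonneg hpos hfacnn
      · calc ρ t l * (1 - η * lam - η * ∏ k ∈ (Finset.Icc 1 L).erase l, (ρ t k)^2)
            ≤ (ε l * (1 - η * lam)^t) * (1 - η * lam) :=
              mul_le_mul hub hfacle hfacnn (mul_nonneg (hε l h1 h2).le hrtnn)
          _ = ε l * (1 - η * lam)^(t+1) := by ring
  refine ⟨fun l h1 h2 t => main t l h1 h2, ⟨hr0, hr1⟩, fun l h1 h2 => ?_⟩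
  apply squeeze_zero (fun t => (main t l h1 h2).1) (fun t => (main t l h1 h2).2)
  have : Filter.Tendsto (fun t : ℕ => (1 - η * lam)^t) Filter.atTop (nhds 0) :=
    tendsto_pow_atTop_nhds_zero_of_lt_one (by linarith) hr1
  simpa using this.const_mul (ε l)
end
end

section
/- Let W_l(t) follow scaled-orthogonal initialization and the gradient-descent updates described in the context, with rank(Φ) ≤ r and m := d − 2r > 0, and suppose η·(λ + ∏_{k≠l} ε_k²) ≤ 1 for every l ∈ {1,…,L}. Then for every l ∈ {1,…,L} and every t ≥ 0 there exists a d×d real matrix A with rank(A) ≤ 2r such that ‖W_l(t) − A‖_F ≤ √m · ε_l · (1 − ηλ)^t, where ‖·‖_F denotes the Frobenius norm. In particular, if λ > 0 the Frobenius distance from W_l(t) to the set of matrices of rank at most 2r tends to 0 as t → ∞. -/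
open Matrix BigOperators Filter

noncomputable section

section helpers
variable {n : Type*} [Fintype n] [DecidableEq n]

lemma chainAux_succ (W : ℕ → Matrix n n ℝ) (i k : ℕ) :
    chainAux W i (k+1) = W (i+k) * chainAux W i k := rfl

lemma chainAux_succ' (W : ℕ → Matrix n n ℝ) (i : ℕ) : ∀ k,
    chainAux W i (k+1) = chainAux W (i+1) k * W i := by
  intro k
  induction k with
  | zero => simp [chainAux]
  | succ k ih =>
      have h : i + (k+1) = (i+1) + k := by omega
      rw [chainAux_succ, ih, ← Matrix.mul_assoc, h, ← chainAux_succ]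

lemma chain_of_lt (W : ℕ → Matrix n n ℝ) {i j : ℕ} (h : j < i) : chain W i j = 1 := by
  unfold chain
  have : j + 1 - i = 0 := by omega
  rw [this]; rfl

lemma chain_succ_top (W : ℕ → Matrix n n ℝ) {i j : ℕ} (h : i ≤ j + 1) :
    chain W i (j+1) = W (j+1) * chain W i j := by
  unfold chain
  have h1 : j + 1 + 1 - i = (j + 1 - i) + 1 := by omega
  have h2 : i + (j + 1 - i) = j + 1 := by omega
  rw [h1, chainAux_succ, h2]

lemma chain_bot (W : ℕ → Matrix n n ℝ) {i j : ℕ} (h : i ≤ j) :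
    chain W i j = chain W (i+1) j * W i := by
  unfold chain
  have h1 : j + 1 - i = (j - i) + 1 := by omega
  have h2 : j + 1 - (i+1) = j - i := by omega
  rw [h1, h2, chainAux_succ']

lemma erase_Icc_prod (L l : ℕ) (hl1 : 1 ≤ l) (hlL : l ≤ L) (f : ℕ → ℝ) :
    ∏ k ∈ (Finset.Icc 1 L).erase l, f k
      = (∏ k ∈ Finset.Icc 1 (l-1), f k) * ∏ k ∈ Finset.Icc (l+1) L, f k := by
  rw [← Finset.prod_union]
  · congr 1
    ext x
    simp only [Finset.mem_erase, Finset.mem_Icc, Finset.mem_union]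
    omega
  · rw [Finset.disjoint_left]
    intro a ha hb
    simp only [Finset.mem_Icc] at ha hb
    omega

lemma Icc_prod_split (L l : ℕ) (hl1 : 1 ≤ l) (hlL : l ≤ L) (f : ℕ → ℝ) :
    ∏ k ∈ Finset.Icc 1 L, f k
      = ((∏ k ∈ Finset.Icc 1 (l-1), f k) * f l) * ∏ k ∈ Finset.Icc (l+1) L, f k := by
  rw [← Finset.mul_prod_erase _ f (show l ∈ Finset.Icc 1 L by simp [hl1, hlL]),
    erase_Icc_prod L l hl1 hlL]
  ring

variable {m' : Type*}
variable {L : ℕ} {M : ℕ → Matrix n n ℝ} {V : ℕ → Matrix n m' ℝ} {γ : ℕ → ℝ}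

lemma chainV (h1 : ∀ l, 1 ≤ l → l ≤ L → M l * V (l-1) = γ l • V l) :
    ∀ j, j ≤ L → chain M 1 j * V 0 = (∏ k ∈ Finset.Icc 1 j, γ k) • V j := by
  intro j
  induction j with
  | zero => intro _; rw [chain_of_lt M (by omega)]; simp
  | succ j ih =>
      intro hj
      have hM := h1 (j+1) (by omega) hj
      simp only [Nat.add_sub_cancel] at hM
      rw [chain_succ_top M (by omega), Matrix.mul_assoc, ih (by omega),
        Matrix.mul_smul, hM, Finset.prod_Icc_succ_top (by omega), smul_smul]

lemma chainVT (h2 : ∀ l, 1 ≤ l → l ≤ L → (M l)ᵀ * V l = γ l • V (l-1)) :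
    ∀ j, j ≤ L → (chain M 1 j)ᵀ * V j = (∏ k ∈ Finset.Icc 1 j, γ k) • V 0 := by
  intro j
  induction j with
  | zero => intro _; rw [chain_of_lt M (by omega)]; simp
  | succ j ih =>
      intro hj
      rw [chain_succ_top M (by omega), Matrix.transpose_mul, Matrix.mul_assoc,
        h2 (j+1) (by omega) hj]
      simp only [Nat.add_sub_cancel]
      rw [Matrix.mul_smul, ih (by omega), Finset.prod_Icc_succ_top (by omega), smul_smul]
      ring_nf

lemma chainV2T (h2 : ∀ l, 1 ≤ l → l ≤ L → (M l)ᵀ * V l = γ l • V (l-1)) :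
    ∀ l, l ≤ L → (chain M (l+1) L)ᵀ * V L = (∏ k ∈ Finset.Icc (l+1) L, γ k) • V l := by
  suffices h : ∀ s, s ≤ L → (chain M (L-s+1) L)ᵀ * V L
      = (∏ k ∈ Finset.Icc (L-s+1) L, γ k) • V (L-s) by
    intro l hl
    have := h (L - l) (by omega)
    have hEq : L - (L - l) = l := by omega
    rwa [hEq] at this
  intro s
  induction s with
  | zero =>
      intro _
      rw [chain_of_lt M (by omega), Finset.Icc_eq_empty (by omega)]
      simp
  | succ s ih =>
      intro hs
      have hL1 : L - (s+1) + 1 = L - s := by omega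
      rw [hL1]
      have hbot : chain M (L-s) L = chain M (L-s+1) L * M (L-s) := chain_bot M (by omega)
      rw [hbot, Matrix.transpose_mul, Matrix.mul_assoc, ih (by omega), Matrix.mul_smul,
        h2 (L-s) (by omega) (by omega)]
      have hsplit : ∏ k ∈ Finset.Icc (L-s) L, γ k
          = γ (L-s) * ∏ k ∈ Finset.Icc (L-s+1) L, γ k := by
        rw [Finset.Icc_eq_cons_Ioc (by omega), Finset.prod_cons, ← Finset.Icc_add_one_left_eq_Ioc]
      rw [hsplit, smul_smul, ← Nat.sub_sub]
      ring_nf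

lemma chainV2 (h1 : ∀ l, 1 ≤ l → l ≤ L → M l * V (l-1) = γ l • V l) :
    ∀ l, l ≤ L → chain M (l+1) L * V l = (∏ k ∈ Finset.Icc (l+1) L, γ k) • V L := by
  suffices h : ∀ s, s ≤ L → chain M (L-s+1) L * V (L-s)
      = (∏ k ∈ Finset.Icc (L-s+1) L, γ k) • V L by
    intro l hl
    have := h (L - l) (by omega)
    have hEq : L - (L - l) = l := by omega
    rwa [hEq] at this
  intro s
  induction s with
  | zero =>
      intro _
      rw [chain_of_lt M (by omega), Finset.Icc_eq_empty (by omega)]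
      simp
  | succ s ih =>
      intro hs
      have hL1 : L - (s+1) + 1 = L - s := by omega
      rw [hL1]
      have hbot : chain M (L-s) L = chain M (L-s+1) L * M (L-s) := chain_bot M (by omega)
      have hM : M (L-s) * V (L-s-1) = γ (L-s) • V (L-s) := h1 (L-s) (by omega) (by omega)
      have hLs : L - (s+1) = L - s - 1 := by omega
      rw [hLs, hbot, Matrix.mul_assoc, hM, Matrix.mul_smul, ih (by omega)]
      have hsplit : ∏ k ∈ Finset.Icc (L-s) L, γ k
          = γ (L-s) * ∏ k ∈ Finset.Icc (L-s+1) L, γ k := by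
        rw [Finset.Icc_eq_cons_Ioc (by omega), Finset.prod_cons, ← Finset.Icc_add_one_left_eq_Ioc]
      rw [hsplit, smul_smul]

end helpers

lemma exists_V0 (r m : ℕ) (Φ Q : Matrix (Fin (2*r+m)) (Fin (2*r+m)) ℝ)
    (hΦ : Φ.rank ≤ r) :
    ∃ V0 : Matrix (Fin (2*r+m)) (Fin m) ℝ,
      V0ᵀ * V0 = 1 ∧ Φ * V0 = 0 ∧ Φᵀ * (Q * V0) = 0 := by
  classical
  let f1 : EuclideanSpace ℝ (Fin (2*r+m)) →ₗ[ℝ] EuclideanSpace ℝ (Fin (2*r+m)) :=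
    Matrix.toEuclideanLin Φ
  let f2 : EuclideanSpace ℝ (Fin (2*r+m)) →ₗ[ℝ] EuclideanSpace ℝ (Fin (2*r+m)) :=
    Matrix.toEuclideanLin (Φᵀ * Q)
  have hrank1 : Module.finrank ℝ (LinearMap.range f1) ≤ r := by
    show Module.finrank ℝ (LinearMap.range (Matrix.toEuclideanLin Φ)) ≤ r
    rw [Matrix.toEuclideanLin_eq_toLin, ← Matrix.rank_eq_finrank_range_toLin]
    exact hΦ
  have hrank2 : Module.finrank ℝ (LinearMap.range f2) ≤ r := by
    show Module.finrank ℝ (LinearMap.range (Matrix.toEuclideanLin (Φᵀ * Q))) ≤ r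
    rw [Matrix.toEuclideanLin_eq_toLin, ← Matrix.rank_eq_finrank_range_toLin]
    calc (Φᵀ * Q).rank ≤ Φᵀ.rank := Matrix.rank_mul_le_left _ _
    _ = Φ.rank := Matrix.rank_transpose _
    _ ≤ r := hΦ
  have hdimE : Module.finrank ℝ (EuclideanSpace ℝ (Fin (2*r+m))) = 2*r+m := by
    simp
  have hker1 : 2*r+m ≤ Module.finrank ℝ (LinearMap.ker f1) + r := by
    have := LinearMap.finrank_range_add_finrank_ker f1
    omega
  have hker2 : 2*r+m ≤ Module.finrank ℝ (LinearMap.ker f2) + r := by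
    have := LinearMap.finrank_range_add_finrank_ker f2
    omega
  have hKdim : m ≤ Module.finrank ℝ ↥(LinearMap.ker f1 ⊓ LinearMap.ker f2) := by
    have h1 := Submodule.finrank_sup_add_finrank_inf_eq (LinearMap.ker f1) (LinearMap.ker f2)
    have h2 := Submodule.finrank_le (LinearMap.ker f1 ⊔ LinearMap.ker f2)
    omega
  set K := LinearMap.ker f1 ⊓ LinearMap.ker f2 with hK
  let b := stdOrthonormalBasis ℝ K
  let v : Fin m → EuclideanSpace ℝ (Fin (2*r+m)) :=
    fun j => (b (Fin.castLE hKdim j) : EuclideanSpace ℝ (Fin (2*r+m)))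
  have hvK : ∀ j, v j ∈ K := fun j => (b (Fin.castLE hKdim j)).2
  have hvon : ∀ i j, (∑ k, v i k * v j k) = (if i = j then (1:ℝ) else 0) := by
    intro i j
    have hb := b.orthonormal
    rw [orthonormal_iff_ite] at hb
    have h := hb (Fin.castLE hKdim i) (Fin.castLE hKdim j)
    rw [Submodule.coe_inner, PiLp.inner_apply] at h
    simp [RCLike.inner_apply, Fin.castLE_inj] at h
    rw [← h]
    exact Finset.sum_congr rfl fun x _ => mul_comm _ _
  have hmv1 : ∀ j, Φ *ᵥ (fun k => v j k) = 0 := by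
    intro j
    have h1 : f1 (v j) = 0 := (LinearMap.mem_ker).1 ((Submodule.mem_inf.1 (hvK j)).1)
    have h2 := congrArg (WithLp.equiv 2 (Fin (2*r+m) → ℝ)) h1
    simpa [f1, f2, Matrix.toEuclideanLin_apply] using h2
  have hmv2 : ∀ j, (Φᵀ * Q) *ᵥ (fun k => v j k) = 0 := by
    intro j
    have h1 : f2 (v j) = 0 := (LinearMap.mem_ker).1 ((Submodule.mem_inf.1 (hvK j)).2)
    have h2 := congrArg (WithLp.equiv 2 (Fin (2*r+m) → ℝ)) h1
    simpa [f1, f2, Matrix.toEuclideanLin_apply] using h2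
  refine ⟨Matrix.of fun i j => v j i, ?_, ?_, ?_⟩
  · ext i j
    rw [Matrix.mul_apply]
    simpa [Matrix.transpose_apply, Matrix.one_apply] using hvon i j
  · ext i j
    rw [Matrix.mul_apply, Matrix.zero_apply]
    have := congrFun (hmv1 j) i
    simpa [Matrix.mulVec, dotProduct] using this
  · rw [← Matrix.mul_assoc]
    ext i j
    rw [Matrix.mul_apply, Matrix.zero_apply]
    have := congrFun (hmv2 j) i
    simpa [Matrix.mulVec, dotProduct] using this

def cSeq (S : Finset ℕ) (η lam : ℝ) (ε : ℕ → ℝ) : ℕ → ℕ → ℝ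
  | 0 => ε
  | (t+1) => fun l => cSeq S η lam ε t l *
      ((1 - η*lam) - η * ∏ k ∈ S.erase l, (cSeq S η lam ε t k)^2)

def vSeq {d m : ℕ} (W0 : ℕ → Matrix (Fin d) (Fin d) ℝ) (ε : ℕ → ℝ)
    (V0 : Matrix (Fin d) (Fin m) ℝ) : ℕ → Matrix (Fin d) (Fin m) ℝ
  | 0 => V0
  | (l+1) => (ε (l+1))⁻¹ • (W0 (l+1) * vSeq W0 ε V0 l)

set_option maxHeartbeats 1000000 in
/-- low-rank bias: every GD iterate `W_l(t)` is within Frobenius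
distance `√m·ε_l·(1−ηλ)ᵗ` of a matrix of rank at most `2r`; in particular, when
`λ > 0` the Frobenius distance from `W_l(t)` to the set of matrices of rank at most
`2r` tends to `0` as `t → ∞`. Here `d = 2r + m` with `m > 0`. -/
theorem statement15
    (r m : ℕ) (hm : 0 < m) (L : ℕ) (hL : 1 ≤ L)
    (Φ : Matrix (Fin (2*r + m)) (Fin (2*r + m)) ℝ) (hΦ : Φ.rank ≤ r)
    (ε : ℕ → ℝ) (hε : ∀ l, 1 ≤ l → l ≤ L → 0 < ε l)
    (η lam : ℝ) (hη : 0 < η) (hlam : 0 ≤ lam)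
    (W : ℕ → ℕ → Matrix (Fin (2*r + m)) (Fin (2*r + m)) ℝ)
    (hW0 : ∀ l, 1 ≤ l → l ≤ L →
      W 0 l * (W 0 l)ᵀ = (ε l)^2 • (1 : Matrix (Fin (2*r + m)) (Fin (2*r + m)) ℝ) ∧
      (W 0 l)ᵀ * W 0 l = (ε l)^2 • (1 : Matrix (Fin (2*r + m)) (Fin (2*r + m)) ℝ))
    (hWupd : ∀ t l, 1 ≤ l → l ≤ L →
      W (t+1) l = (1 - η * lam) • W t l
        - η • ((chain (W t) (l+1) L)ᵀ * (chain (W t) 1 L - Φ) * (chain (W t) 1 (l-1))ᵀ))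
    (hstep : ∀ l, 1 ≤ l → l ≤ L →
      η * (lam + ∏ k ∈ (Finset.Icc 1 L).erase l, (ε k)^2) ≤ 1) :
    (∀ l, 1 ≤ l → l ≤ L → ∀ t : ℕ,
      ∃ A : Matrix (Fin (2*r + m)) (Fin (2*r + m)) ℝ,
        A.rank ≤ 2*r ∧
        frobNorm (W t l - A) ≤ Real.sqrt (m : ℝ) * ε l * (1 - η * lam)^t) ∧
    (0 < lam → ∀ l, 1 ≤ l → l ≤ L →
      ∃ A : ℕ → Matrix (Fin (2*r + m)) (Fin (2*r + m)) ℝ,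
        (∀ t, (A t).rank ≤ 2*r) ∧
        Filter.Tendsto (fun t : ℕ => frobNorm (W t l - A t)) Filter.atTop (nhds 0)) := by
  classical
  have hεsq : 0 ≤ ∏ k ∈ (Finset.Icc 1 L).erase 1, (ε k)^2 :=
    Finset.prod_nonneg fun k _ => sq_nonneg _
  have honl : 0 ≤ 1 - η * lam := by
    have h := hstep 1 le_rfl hL
    nlinarith
  have honl1 : 1 - η * lam ≤ 1 := by nlinarith
  obtain ⟨V0, hV0orth, hV0Φ, hV0Q⟩ := exists_V0 r m Φ (chain (W 0) 1 L) hΦ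
  set V : ℕ → Matrix (Fin (2*r+m)) (Fin m) ℝ := vSeq (W 0) ε V0 with hVdef
  have hV0 : V 0 = V0 := rfl
  have hVsucc : ∀ l, V (l+1) = (ε (l+1))⁻¹ • (W 0 (l+1) * V l) := fun l => rfl
  have hεne : ∀ l, 1 ≤ l → l ≤ L → ε l ≠ 0 := fun l h1 h2 => ne_of_gt (hε l h1 h2)
  have hVstep1 : ∀ l, 1 ≤ l → l ≤ L → W 0 l * V (l-1) = ε l • V l := by
    intro l h1 h2
    obtain ⟨l', rfl⟩ : ∃ l', l = l'+1 := ⟨l-1, by omega⟩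
    rw [Nat.add_sub_cancel, hVsucc l', smul_inv_smul₀ (hεne _ h1 h2)]
  have hVorth : ∀ l, l ≤ L → (V l)ᵀ * V l = 1 := by
    intro l
    induction l with
    | zero => intro _; exact hV0orth
    | succ l ih =>
        intro hl
        have h2 := (hW0 (l+1) (by omega) hl).2
        have hcalc : (W 0 (l+1) * V l)ᵀ * (W 0 (l+1) * V l)
            = (ε (l+1))^2 • (1 : Matrix (Fin m) (Fin m) ℝ) := by
          rw [Matrix.transpose_mul, Matrix.mul_assoc, ← Matrix.mul_assoc ((W 0 (l+1))ᵀ), h2,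
            Matrix.smul_mul, Matrix.one_mul, Matrix.mul_smul, ih (by omega)]
        rw [hVsucc l, Matrix.transpose_smul, Matrix.smul_mul, Matrix.mul_smul, smul_smul,
          hcalc, smul_smul]
        rw [show (ε (l+1))⁻¹ * (ε (l+1))⁻¹ * (ε (l+1))^2 = 1 by
          have hne := hεne (l+1) (by omega) hl
          rw [pow_two]
          field_simp]
        rw [one_smul]
  have hVstep2 : ∀ l, 1 ≤ l → l ≤ L → (W 0 l)ᵀ * V l = ε l • V (l-1) := by
    intro l h1 h2
    obtain ⟨l', rfl⟩ : ∃ l', l = l'+1 := ⟨l-1, by omega⟩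
    rw [Nat.add_sub_cancel, hVsucc l', Matrix.mul_smul, ← Matrix.mul_assoc,
      (hW0 _ h1 h2).2, Matrix.smul_mul, Matrix.one_mul, smul_smul]
    rw [show (ε (l'+1))⁻¹ * (ε (l'+1))^2 = ε (l'+1) by
      rw [pow_two, ← mul_assoc, inv_mul_cancel₀ (hεne _ h1 h2), one_mul]]
  set c : ℕ → ℕ → ℝ := cSeq (Finset.Icc 1 L) η lam ε with hcdef
  have hc0 : ∀ l, c 0 l = ε l := fun _ => rfl
  have hcs : ∀ t l, c (t+1) l
      = c t l * ((1 - η*lam) - η * ∏ k ∈ (Finset.Icc 1 L).erase l, (c t k)^2) :=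
    fun _ _ => rfl
  have hchain0 : chain (W 0) 1 L * V 0 = (∏ k ∈ Finset.Icc 1 L, ε k) • V L :=
    chainV hVstep1 L le_rfl
  have hVLΦ : Φᵀ * V L = 0 := by
    have h := hV0Q
    rw [← hV0, hchain0, Matrix.mul_smul] at h
    have hne : (∏ k ∈ Finset.Icc 1 L, ε k) ≠ 0 :=
      Finset.prod_ne_zero_iff.2 fun k hk =>
        hεne k (Finset.mem_Icc.1 hk).1 (Finset.mem_Icc.1 hk).2
    exact (smul_eq_zero.1 h).resolve_left hne
  have hΦV0' : Φ * V 0 = 0 := hV0Φ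
  have key : ∀ t, ∀ l, 1 ≤ l → l ≤ L →
      (W t l * V (l-1) = c t l • V l) ∧ ((W t l)ᵀ * V l = c t l • V (l-1)) ∧
      0 ≤ c t l ∧ c t l ≤ ε l * (1 - η*lam)^t := by
    intro t
    induction t with
    | zero =>
        intro l h1 h2
        refine ⟨?_, ?_, ?_, ?_⟩
        · rw [hc0]; exact hVstep1 l h1 h2
        · rw [hc0]; exact hVstep2 l h1 h2
        · rw [hc0]; exact (hε l h1 h2).le
        · rw [hc0, pow_zero, mul_one]
    | succ t ih =>
        have h1 : ∀ l, 1 ≤ l → l ≤ L → W t l * V (l-1) = c t l • V l :=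
          fun l a b => (ih l a b).1
        have h2 : ∀ l, 1 ≤ l → l ≤ L → (W t l)ᵀ * V l = c t l • V (l-1) :=
          fun l a b => (ih l a b).2.1
        intro l hl1 hlL
        set P1 := ∏ k ∈ Finset.Icc 1 (l-1), c t k with hP1
        set Pa := ∏ k ∈ Finset.Icc 1 L, c t k with hPa
        set P2 := ∏ k ∈ Finset.Icc (l+1) L, c t k with hP2
        have e1 : (chain (W t) 1 (l-1))ᵀ * V (l-1) = P1 • V 0 := chainVT h2 (l-1) (by omega)
        have e2 : chain (W t) 1 L * V 0 = Pa • V L := chainV h1 L le_rfl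
        have e3 : (chain (W t) (l+1) L)ᵀ * V L = P2 • V l := chainV2T h2 l hlL
        have e4 : chain (W t) (l+1) L * V l = P2 • V L := chainV2 h1 l hlL
        have e5 : (chain (W t) 1 L)ᵀ * V L = Pa • V 0 := chainVT h2 L le_rfl
        have e6 : chain (W t) 1 (l-1) * V 0 = P1 • V (l-1) := chainV h1 (l-1) (by omega)
        have hco : (1 - η*lam) * c t l - η * ((P1 * Pa) * P2) = c (t+1) l := by
          have hsplit := Icc_prod_split L l hl1 hlL (c t)
          have herase := erase_Icc_prod L l hl1 hlL (c t)
          rw [← hP1, ← hPa, ← hP2] at hsplit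
          rw [← hP1, ← hP2] at herase
          rw [hcs, Finset.prod_pow, herase, hsplit]
          ring
        have hcoT : (1 - η*lam) * c t l - η * ((P2 * Pa) * P1) = c (t+1) l := by
          rw [← hco]; ring
        have hinner : ((chain (W t) (l+1) L)ᵀ * (chain (W t) 1 L - Φ)
              * (chain (W t) 1 (l-1))ᵀ) * V (l-1)
            = ((P1 * Pa) * P2) • V l := by
          rw [Matrix.mul_assoc, e1, Matrix.mul_smul, Matrix.mul_assoc, Matrix.sub_mul, e2,
            hΦV0', sub_zero, Matrix.mul_smul, e3, smul_smul, smul_smul]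
        have hA : W (t+1) l * V (l-1) = c (t+1) l • V l := by
          rw [hWupd t l hl1 hlL, Matrix.sub_mul, Matrix.smul_mul, Matrix.smul_mul,
            h1 l hl1 hlL, hinner, smul_smul, smul_smul, ← sub_smul, hco]
        have hinnerT : (chain (W t) 1 (l-1) * ((chain (W t) 1 L - Φ)ᵀ
              * chain (W t) (l+1) L)) * V l
            = ((P2 * Pa) * P1) • V (l-1) := by
          rw [Matrix.mul_assoc, Matrix.mul_assoc, e4, Matrix.mul_smul, Matrix.mul_smul,
            Matrix.transpose_sub, Matrix.sub_mul, e5, hVLΦ, sub_zero, Matrix.mul_smul, e6,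
            smul_smul, smul_smul]
        have hB : (W (t+1) l)ᵀ * V l = c (t+1) l • V (l-1) := by
          have hT : (W (t+1) l)ᵀ = (1-η*lam) • (W t l)ᵀ
              - η • (chain (W t) 1 (l-1) * ((chain (W t) 1 L - Φ)ᵀ
                  * chain (W t) (l+1) L)) := by
            rw [hWupd t l hl1 hlL, Matrix.transpose_sub, Matrix.transpose_smul,
              Matrix.transpose_smul, Matrix.transpose_mul, Matrix.transpose_mul,
              Matrix.transpose_transpose, Matrix.transpose_transpose]
          rw [hT, Matrix.sub_mul, Matrix.smul_mul, Matrix.smul_mul, h2 l hl1 hlL, hinnerT,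
            smul_smul, smul_smul, ← sub_smul, hcoT]
        have hprod_le : ∏ k ∈ (Finset.Icc 1 L).erase l, (c t k)^2
            ≤ ∏ k ∈ (Finset.Icc 1 L).erase l, (ε k)^2 := by
          apply Finset.prod_le_prod
          · intro k _; exact sq_nonneg _
          · intro k hk
            have hk' := Finset.mem_Icc.1 (Finset.mem_of_mem_erase hk)
            have h0 := (ih k hk'.1 hk'.2).2.2.1
            have hle : c t k ≤ ε k := by
              have hb := (ih k hk'.1 hk'.2).2.2.2
              have hpow : (1-η*lam)^t ≤ 1 := pow_le_one₀ honl honl1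
              have h3 : ε k * (1-η*lam)^t ≤ ε k * 1 :=
                mul_le_mul_of_nonneg_left hpow (hε k hk'.1 hk'.2).le
              rw [mul_one] at h3
              exact hb.trans h3
            exact pow_le_pow_left₀ h0 hle 2
        have hprod_nonneg : 0 ≤ ∏ k ∈ (Finset.Icc 1 L).erase l, (c t k)^2 :=
          Finset.prod_nonneg fun k _ => sq_nonneg _
        have hstepl := hstep l hl1 hlL
        have hfac0 : 0 ≤ (1-η*lam) - η * ∏ k ∈ (Finset.Icc 1 L).erase l, (c t k)^2 := by
          have hmul := mul_le_mul_of_nonneg_left hprod_le hη.le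
          have hexp : η * (lam + ∏ k ∈ (Finset.Icc 1 L).erase l, (ε k)^2)
              = η*lam + η * ∏ k ∈ (Finset.Icc 1 L).erase l, (ε k)^2 := by ring
          rw [hexp] at hstepl
          linarith
        have hfac1 : (1-η*lam) - η * ∏ k ∈ (Finset.Icc 1 L).erase l, (c t k)^2
            ≤ 1-η*lam := by
          have := mul_nonneg hη.le hprod_nonneg
          linarith
        refine ⟨hA, hB, ?_, ?_⟩
        · rw [hcs]
          exact mul_nonneg (ih l hl1 hlL).2.2.1 hfac0
        · rw [hcs]
          have hb := (ih l hl1 hlL).2.2.2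
          calc c t l * ((1-η*lam) - η * ∏ k ∈ (Finset.Icc 1 L).erase l, (c t k)^2)
              ≤ (ε l * (1-η*lam)^t) * (1-η*lam) :=
                mul_le_mul hb hfac1 hfac0
                  (mul_nonneg (hε l hl1 hlL).le (pow_nonneg honl t))
          _ = ε l * (1-η*lam)^(t+1) := by rw [pow_succ]; ring
  have hrankV : ∀ j, j ≤ L →
      ((1 : Matrix (Fin (2*r+m)) (Fin (2*r+m)) ℝ) - V j * (V j)ᵀ).rank ≤ 2*r := by
    intro j hj
    set P : Matrix (Fin (2*r+m)) (Fin (2*r+m)) ℝ := 1 - V j * (V j)ᵀ with hP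
    have hPV : P * V j = 0 := by
      rw [hP, Matrix.sub_mul, Matrix.one_mul, Matrix.mul_assoc, hVorth j hj,
        Matrix.mul_one, sub_self]
    have hVrank : m ≤ (V j).rank := by
      have h1 : ((V j)ᵀ * V j).rank ≤ (V j).rank := Matrix.rank_mul_le_right _ _
      rw [hVorth j hj, Matrix.rank_one] at h1
      simpa using h1
    have hcomp : P.mulVecLin ∘ₗ (V j).mulVecLin = 0 := by
      rw [← Matrix.mulVecLin_mul, hPV, Matrix.mulVecLin_zero]
    have h2 : LinearMap.range (V j).mulVecLin ≤ LinearMap.ker P.mulVecLin :=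
      LinearMap.range_le_ker_iff.2 hcomp
    have h3 := Submodule.finrank_mono h2
    have hVr : (V j).rank = Module.finrank ℝ (LinearMap.range (V j).mulVecLin) := rfl
    have hPr : P.rank = Module.finrank ℝ (LinearMap.range P.mulVecLin) := rfl
    have h4 := LinearMap.finrank_range_add_finrank_ker P.mulVecLin
    have h5 : Module.finrank ℝ (Fin (2*r+m) → ℝ) = 2*r+m := by simp
    omega
  have main : ∀ l, 1 ≤ l → l ≤ L → ∀ t : ℕ,
      ∃ A : Matrix (Fin (2*r + m)) (Fin (2*r + m)) ℝ,
        A.rank ≤ 2*r ∧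
        frobNorm (W t l - A) ≤ Real.sqrt (m : ℝ) * ε l * (1 - η * lam)^t := by
    intro l hl1 hlL t
    refine ⟨W t l * (1 - V (l-1) * (V (l-1))ᵀ), ?_, ?_⟩
    · calc (W t l * (1 - V (l-1) * (V (l-1))ᵀ)).rank
          ≤ (1 - V (l-1) * (V (l-1))ᵀ).rank := Matrix.rank_mul_le_right _ _
      _ ≤ 2*r := hrankV (l-1) (by omega)
    · have hdiff : W t l - W t l * (1 - V (l-1) * (V (l-1))ᵀ)
          = c t l • (V l * (V (l-1))ᵀ) := by
        rw [Matrix.mul_sub, Matrix.mul_one, sub_sub_cancel, ← Matrix.mul_assoc,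
          (key t l hl1 hlL).1, Matrix.smul_mul]
      rw [hdiff]
      have hX : (c t l • (V l * (V (l-1))ᵀ))ᵀ * (c t l • (V l * (V (l-1))ᵀ))
          = ((c t l)^2) • (V (l-1) * (V (l-1))ᵀ) := by
        rw [Matrix.transpose_smul, Matrix.smul_mul, Matrix.mul_smul, smul_smul,
          Matrix.transpose_mul, Matrix.transpose_transpose, Matrix.mul_assoc,
          ← Matrix.mul_assoc ((V l)ᵀ), hVorth l hlL, Matrix.one_mul, ← pow_two]
      have htr : Matrix.trace ((V (l-1)) * (V (l-1))ᵀ) = (m:ℝ) := by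
        rw [Matrix.trace_mul_comm, hVorth (l-1) (by omega), Matrix.trace_one]
        simp
      show Real.sqrt _ ≤ _
      rw [hX, Matrix.trace_smul, htr, smul_eq_mul]
      have h0 : (0:ℝ) ≤ c t l := (key t l hl1 hlL).2.2.1
      rw [Real.sqrt_mul (sq_nonneg _), Real.sqrt_sq h0]
      have hre : Real.sqrt (m:ℝ) * ε l * (1-η*lam)^t
          = (ε l * (1-η*lam)^t) * Real.sqrt (m:ℝ) := by ring
      rw [hre]
      exact mul_le_mul_of_nonneg_right (key t l hl1 hlL).2.2.2 (Real.sqrt_nonneg _)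
  refine ⟨main, ?_⟩
  intro hlampos l hl1 hlL
  choose A hA1 hA2 using main l hl1 hlL
  refine ⟨A, hA1, ?_⟩
  have h1 : Filter.Tendsto (fun t : ℕ => (1-η*lam)^t) Filter.atTop (nhds 0) := by
    apply tendsto_pow_atTop_nhds_zero_of_lt_one honl
    nlinarith
  have hg : Filter.Tendsto (fun t : ℕ => Real.sqrt (m:ℝ) * ε l * (1-η*lam)^t)
      Filter.atTop (nhds 0) := by
    have := h1.const_mul (Real.sqrt (m:ℝ) * ε l)
    simpa [mul_assoc] using this
  exact squeeze_zero (fun t => Real.sqrt_nonneg _) (fun t => hA2 t) hg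
end
end

section
/- Let U_1,…,U_L and V_1,…,V_L be orthogonal d×d real matrices with V_{l+1} = U_l for l ∈ {1,…,L−1}. Let W_1,…,W_L be d×d real matrices, define W'_l := U_lᵀ·W_l·V_l for each l, and define Φ' := U_Lᵀ·Φ·V_1. Then the gradient-descent update commutes with this conjugation: for every l ∈ {1,…,L}, U_lᵀ·[(1 − ηλ)·W_l − η·(W_L⋯W_{l+1})ᵀ·(W_L·W_{L−1}⋯W_1 − Φ)·(W_{l−1}⋯W_1)ᵀ]·V_l = (1 − ηλ)·W'_l − η·(W'_L⋯W'_{l+1})ᵀ·(W'_L·W'_{L−1}⋯W'_1 − Φ')·(W'_{l−1}⋯W'_1)ᵀ, where empty products equal I_d. -/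
open Matrix BigOperators Filter

noncomputable section

lemma chain_empty {n : Type*} [Fintype n] [DecidableEq n]
    (W : ℕ → Matrix n n ℝ) {i j : ℕ} (h : j < i) : chain W i j = 1 := by
  unfold chain
  rw [Nat.sub_eq_zero_of_le h]
  rfl

lemma chain_self {n : Type*} [Fintype n] [DecidableEq n]
    (W : ℕ → Matrix n n ℝ) (i : ℕ) : chain W i i = W i := by
  unfold chain
  rw [show i + 1 - i = 1 by omega]
  show W (i + 0) * chainAux W i 0 = W i
  simp [chainAux]

lemma chain_succ {n : Type*} [Fintype n] [DecidableEq n]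
    (W : ℕ → Matrix n n ℝ) {i j : ℕ} (h : i ≤ j + 1) :
    chain W i (j + 1) = W (j + 1) * chain W i j := by
  unfold chain
  rw [show j + 1 + 1 - i = (j + 1 - i) + 1 by omega]
  show W (i + (j + 1 - i)) * chainAux W i (j + 1 - i) = _
  rw [show i + (j + 1 - i) = j + 1 by omega]

lemma chain_conj
    (d : ℕ) (L : ℕ)
    (U V : ℕ → Matrix (Fin d) (Fin d) ℝ)
    (hU : ∀ l, 1 ≤ l → l ≤ L → (U l)ᵀ * U l = 1 ∧ U l * (U l)ᵀ = 1)
    (hUV : ∀ l, 1 ≤ l → l + 1 ≤ L → V (l+1) = U l)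
    (W : ℕ → Matrix (Fin d) (Fin d) ℝ)
    (W' : ℕ → Matrix (Fin d) (Fin d) ℝ)
    (hW' : ∀ l, W' l = (U l)ᵀ * W l * V l)
    (i : ℕ) (hi : 1 ≤ i) :
    ∀ j, i ≤ j → j ≤ L → chain W' i j = (U j)ᵀ * chain W i j * V i := by
  intro j hij hjL
  induction j, hij using Nat.le_induction with
  | base => rw [chain_self, chain_self, hW']
  | succ j hij ih =>
    have hjL' : j ≤ L := by omega
    have h1j : 1 ≤ j := le_trans hi hij
    rw [chain_succ W' (by omega), chain_succ W (by omega), ih hjL', hW' (j+1),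
      hUV j h1j hjL]
    simp only [mul_assoc]
    rw [← mul_assoc (U j) ((U j)ᵀ), (hU j h1j hjL').2, one_mul]

/-- the gradient-descent update commutes with conjugation by a
chain of orthogonal matrices `U_l, V_l` with `V_{l+1} = U_l`, where the target is
conjugated as `Φ' = U_Lᵀ·Φ·V_1`. -/
theorem statement16
    (d : ℕ) (hd : 1 ≤ d) (L : ℕ) (hL : 1 ≤ L)
    (Φ : Matrix (Fin d) (Fin d) ℝ)
    (η lam : ℝ) (hη : 0 < η) (hlam : 0 ≤ lam)
    (U V : ℕ → Matrix (Fin d) (Fin d) ℝ)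
    (hU : ∀ l, 1 ≤ l → l ≤ L → (U l)ᵀ * U l = 1 ∧ U l * (U l)ᵀ = 1)
    (hV : ∀ l, 1 ≤ l → l ≤ L → (V l)ᵀ * V l = 1 ∧ V l * (V l)ᵀ = 1)
    (hUV : ∀ l, 1 ≤ l → l + 1 ≤ L → V (l+1) = U l)
    (W : ℕ → Matrix (Fin d) (Fin d) ℝ)
    (W' : ℕ → Matrix (Fin d) (Fin d) ℝ)
    (hW' : ∀ l, W' l = (U l)ᵀ * W l * V l)
    (Φ' : Matrix (Fin d) (Fin d) ℝ)
    (hΦ' : Φ' = (U L)ᵀ * Φ * V 1) :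
    ∀ l, 1 ≤ l → l ≤ L →
      (U l)ᵀ * ((1 - η * lam) • W l
          - η • ((chain W (l+1) L)ᵀ * (chain W 1 L - Φ) * (chain W 1 (l-1))ᵀ)) * V l
        = (1 - η * lam) • W' l
          - η • ((chain W' (l+1) L)ᵀ * (chain W' 1 L - Φ') * (chain W' 1 (l-1))ᵀ) := by
  intro l hl hlL
  have conj := chain_conj d L U V hU hUV W W' hW'
  -- Claim 1 : chain W' (l+1) L = (U L)ᵀ * chain W (l+1) L * U l
  have hA : chain W' (l+1) L = (U L)ᵀ * chain W (l+1) L * U l := by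
    rcases eq_or_lt_of_le hlL with h | h
    · subst h
      rw [chain_empty W' (by omega), chain_empty W (by omega), mul_one, (hU l hl hlL).1]
    · rw [conj (l+1) (by omega) L h le_rfl, hUV l hl h]
  -- Claim 2 : chain W' 1 (l-1) = (V l)ᵀ * chain W 1 (l-1) * V 1
  have hC : chain W' 1 (l-1) = (V l)ᵀ * chain W 1 (l-1) * V 1 := by
    rcases eq_or_lt_of_le hl with h | h
    · subst h
      rw [chain_empty W' (by omega), chain_empty W (by omega), mul_one]
      exact ((hV 1 le_rfl hL).1).symm
    · have h2 : 2 ≤ l := h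
      have : chain W' 1 (l-1) = (U (l-1))ᵀ * chain W 1 (l-1) * V 1 :=
        conj 1 le_rfl (l-1) (by omega) (by omega)
      rw [this, ← hUV (l-1) (by omega) (by omega), show l - 1 + 1 = l by omega]
  -- Claim 3 : full chain
  have hB : chain W' 1 L = (U L)ᵀ * chain W 1 L * V 1 :=
    conj 1 le_rfl L hL le_rfl
  have hmid : chain W' 1 L - Φ' = (U L)ᵀ * (chain W 1 L - Φ) * V 1 := by
    rw [hB, hΦ', Matrix.mul_sub, Matrix.sub_mul]
  rw [hA, hmid, hC, hW' l]
  have hUL : U L * (U L)ᵀ = 1 := (hU L hL le_rfl).2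
  have hV1 : V 1 * (V 1)ᵀ = 1 := (hV 1 le_rfl hL).2
  set A := chain W (l+1) L
  set B := chain W 1 L - Φ
  set C := chain W 1 (l-1)
  have key : ((U L)ᵀ * A * U l)ᵀ * ((U L)ᵀ * B * V 1) * ((V l)ᵀ * C * V 1)ᵀ
      = (U l)ᵀ * (Aᵀ * B * Cᵀ) * V l := by
    simp only [Matrix.transpose_mul, Matrix.transpose_transpose, mul_assoc]
    rw [← mul_assoc (U L) ((U L)ᵀ), hUL, one_mul, ← mul_assoc (V 1) ((V 1)ᵀ), hV1, one_mul]
  rw [key]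
  simp only [Matrix.mul_sub, Matrix.sub_mul, Matrix.mul_smul, Matrix.smul_mul, mul_assoc]
end
end
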